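/- In ℂ[x₁,x₂,x₃,x₄] let y₁, y₂, y₃, y₄ be the D₄ basic invariants and define Y₁ = y₁ − (5/4)y₃y₄ + (5/16)y₄³, Y₂ = y₂, Y₃ = y₃ − (1/2)y₄², Y₄ = (1/8)y₄. Then Δ(Y₄) = 1 and Δ(Y₁) = Δ(Y₂) = Δ(Y₃) = 0, where Δp = ∑_{a=1}^{4} ∂²p/∂xₐ². -/
import Mathlib


open MvPolynomial

noncomputable section

def y₁D4 : MvPolynomial (Fin 4) ℂ := X 0 ^ 6 + X 1 ^ 6 + X 2 ^ 6 + X 3 ^ 6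
def y₂D4 : MvPolynomial (Fin 4) ℂ := X 0 * X 1 * X 2 * X 3
def y₃D4 : MvPolynomial (Fin 4) ℂ := X 0 ^ 4 + X 1 ^ 4 + X 2 ^ 4 + X 3 ^ 4
def y₄D4 : MvPolynomial (Fin 4) ℂ := X 0 ^ 2 + X 1 ^ 2 + X 2 ^ 2 + X 3 ^ 2

/-- The Laplace operator `Δp = ∑ₐ ∂²p/∂xₐ²`. -/
def lap4 (p : MvPolynomial (Fin 4) ℂ) : MvPolynomial (Fin 4) ℂ :=
  ∑ a, pderiv a (pderiv a p)

set_option maxHeartbeats 2000000 in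
/-- The modified `D₄` basic invariants `Y₁ = y₁ - (5/4)y₃y₄ + (5/16)y₄³`, `Y₂ = y₂`,
`Y₃ = y₃ - (1/2)y₄²`, `Y₄ = (1/8)y₄` satisfy `Δ(Y₄) = 1`, `Δ(Y₁) = Δ(Y₂) = Δ(Y₃) = 0`. -/
theorem statement_11 :
    lap4 (C ((1 : ℂ) / 8) * y₄D4) = 1 ∧
    lap4 (y₁D4 - C ((5 : ℂ) / 4) * y₃D4 * y₄D4 + C ((5 : ℂ) / 16) * y₄D4 ^ 3) = 0 ∧
    lap4 y₂D4 = 0 ∧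
    lap4 (y₃D4 - C ((1 : ℂ) / 2) * y₄D4 ^ 2) = 0 := by
  have h2 : (2:MvPolynomial (Fin 4) ℂ) = C 2 := (map_ofNat C 2).symm
  have h3 : (3:MvPolynomial (Fin 4) ℂ) = C 3 := (map_ofNat C 3).symm
  have h4 : (4:MvPolynomial (Fin 4) ℂ) = C 4 := (map_ofNat C 4).symm
  have h5 : (5:MvPolynomial (Fin 4) ℂ) = C 5 := (map_ofNat C 5).symm
  have h6 : (6:MvPolynomial (Fin 4) ℂ) = C 6 := (map_ofNat C 6).symm
  refine ⟨?_, ?_, ?_, ?_⟩ <;>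
  · apply MvPolynomial.funext
    intro x
    simp [lap4, y₁D4, y₂D4, y₃D4, y₄D4, Fin.sum_univ_four, pderiv_mul, h2, h3, h4, h5, h6]
    try ring
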